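/- Assume 1 + p₁ - p₂ ≠ 0. Then for every n ∈ ℕ, the expected number of captures after n games has the exact closed form: ∑_{i=0}^{n-1} (p₁ * (η i 0) + p₂ * (η i 1)) = n * p₁ / (1 + p₁ - p₂) - p₁ * (p₂ - p₁) * (1 - (p₂ - p₁)^n) / (1 + p₁ - p₂)^2. -/

import Mathlib

open Matrix Filter

/-- Transition matrix of the two-state Markov chain:
row 0 = (1 - p₁, 1 - p₂), row 1 = (p₁, p₂). -/
def M (p₁ p₂ : ℝ) : Matrix (Fin 2) (Fin 2) ℝ := !![1 - p₁, 1 - p₂; p₁, p₂]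

/-- Initial distribution: defender at the target center. -/
def e₁ : Fin 2 → ℝ := ![1, 0]

/-- Distribution of the chain after `n` games when started in `S₁`. -/
def η (p₁ p₂ : ℝ) (n : ℕ) : Fin 2 → ℝ := (M p₁ p₂ ^ n) *ᵥ e₁

lemma eta_closed (p₁ p₂ : ℝ) (h : 1 + p₁ - p₂ ≠ 0) (n : ℕ) :
    η p₁ p₂ n 0 = ((1 - p₂) + p₁ * (p₂ - p₁) ^ n) / (1 + p₁ - p₂) ∧
    η p₁ p₂ n 1 = (p₁ - p₁ * (p₂ - p₁) ^ n) / (1 + p₁ - p₂) := by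
  induction n with
  | zero =>
    simp only [η, pow_zero, Matrix.one_mulVec, e₁]
    constructor <;> simp <;> field_simp <;> ring
  | succ n ih =>
    obtain ⟨ih0, ih1⟩ := ih
    have hstep : η p₁ p₂ (n + 1) = M p₁ p₂ *ᵥ η p₁ p₂ n := by
      simp only [η, pow_succ', Matrix.mulVec_mulVec]
    rw [hstep]
    simp only [M, Matrix.mulVec, dotProduct, Fin.sum_univ_two, Matrix.of_apply,
      Matrix.cons_val', Matrix.cons_val_zero, Matrix.cons_val_one, Matrix.head_cons,
      Matrix.empty_val', Matrix.cons_val_fin_one, Matrix.head_fin_const]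
    rw [ih0, ih1]
    constructor <;> · field_simp; ring

theorem expected_captures_closed_form (p₁ p₂ : ℝ) (h : 1 + p₁ - p₂ ≠ 0) (n : ℕ) :
    ∑ i ∈ Finset.range n, (p₁ * η p₁ p₂ i 0 + p₂ * η p₁ p₂ i 1) =
      n * p₁ / (1 + p₁ - p₂) -
        p₁ * (p₂ - p₁) * (1 - (p₂ - p₁) ^ n) / (1 + p₁ - p₂) ^ 2 := by
  induction n with
  | zero => simp
  | succ n ih =>
    rw [Finset.sum_range_succ, ih, (eta_closed p₁ p₂ h n).1, (eta_closed p₁ p₂ h n).2]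
    push_cast
    field_simp
    ring
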